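/- Let P be a two-orbit n-polytope in class 2_I with base flag Φ, stabilizer subgroups Γ_{Φ_J} of the subchains Φ_J = {Φ_j : j ∈ J} (J ⊆ N), and distinguished subgroups Γ_J = ⟨ρ_i, α_{j,k}, α_{j,i,j} | i ∈ I ∩ (N\J), j,k ∈ (N\I) ∩ (N\J)⟩. Then Γ_{Φ_J} = Γ_J for every J ⊆ N. -/

import Mathlib

/-- An abstract polytope of rank `n`, presented by a partially ordered type of faces
with a strictly monotone rank function onto `{-1, 0, ..., n}`, such that every flag
(maximal chain) has exactly one face of each rank (`faceAt`), every flag has a unique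
`i`-adjacent flag for each `i = 0, ..., n-1` (the diamond condition, via `adj`), and
which is strongly flag-connected. -/
structure AbstractPolytope (n : ℕ) (Face : Type*) [PartialOrder Face] where
  rank : Face → ℤ
  rank_strictMono : ∀ {F G : Face}, F < G → rank F < rank G
  rank_le : ∀ F : Face, -1 ≤ rank F ∧ rank F ≤ (n : ℤ)
  /-- the unique face of rank `i` in the flag `Φ`, for `-1 ≤ i ≤ n` -/
  faceAt : Flag Face → ℤ → Face
  faceAt_mem : ∀ (Φ : Flag Face) (i : ℤ), -1 ≤ i → i ≤ (n : ℤ) → faceAt Φ i ∈ Φ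
  faceAt_rank : ∀ (Φ : Flag Face) (i : ℤ), -1 ≤ i → i ≤ (n : ℤ) → rank (faceAt Φ i) = i
  faceAt_eq : ∀ (Φ : Flag Face) (F : Face), F ∈ Φ → faceAt Φ (rank F) = F
  /-- the unique `i`-adjacent flag of `Φ`, for `0 ≤ i ≤ n-1` -/
  adj : Flag Face → ℕ → Flag Face
  adj_ne : ∀ (Φ : Flag Face) (i : ℕ), i < n → adj Φ i ≠ Φ
  adj_mem : ∀ (Φ : Flag Face) (i : ℕ), i < n →
    ∀ F ∈ Φ, rank F ≠ (i : ℤ) → F ∈ adj Φ i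
  adj_unique : ∀ (Φ Ψ : Flag Face) (i : ℕ), i < n → Ψ ≠ Φ →
    (∀ F ∈ Φ, rank F ≠ (i : ℤ) → F ∈ Ψ) → Ψ = adj Φ i
  /-- strong flag-connectedness: any two flags are joined by a sequence of successively
  adjacent flags, with all adjacencies at ranks not occurring among their common faces -/
  connected : ∀ Φ Ψ : Flag Face, ∃ (l : ℕ) (c : ℕ → Flag Face), c 0 = Φ ∧ c l = Ψ ∧
    ∀ m < l, ∃ i : ℕ, i < n ∧ c (m + 1) = adj (c m) i ∧
      ∀ F : Face, F ∈ Φ → F ∈ Ψ → rank F ≠ (i : ℤ)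

namespace AbstractPolytope

variable {n : ℕ} {Face : Type*} [PartialOrder Face]

/-- The automorphism group `Γ(P)`: order automorphisms of the set of faces.
It acts on flags via `Flag.map`; `g • Φ` denotes the image flag. -/
instance : MulAction (Face ≃o Face) (Flag Face) where
  smul g Φ := Flag.map g Φ
  one_smul Φ := by
    show Flag.map 1 Φ = Φ
    ext x
    simp [Flag.map, Flag.ofIsMaxChain]
  mul_smul g h Φ := by
    show Flag.map (g * h) Φ = Flag.map g (Flag.map h Φ)
    ext x
    simp [Flag.map, Flag.ofIsMaxChain, Set.image_image]

lemma smul_flag_def (g : Face ≃o Face) (Φ : Flag Face) : g • Φ = Flag.map g Φ := rfl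

/-- Two flags lie in the same orbit under the automorphism group. -/
def SameOrbit (Φ Ψ : Flag Face) : Prop := ∃ g : Face ≃o Face, g • Φ = Ψ

/-- The polytope has exactly two orbits on flags. -/
def TwoOrbit (_A : AbstractPolytope n Face) : Prop :=
  ∃ Φ Ψ : Flag Face, ¬ SameOrbit Φ Ψ ∧ ∀ X : Flag Face, SameOrbit X Φ ∨ SameOrbit X Ψ

/-- `I` is the class type set of the two-orbit polytope `A`: it consists precisely of
those ranks `i ∈ {0,...,n-1}` such that every flag and its `i`-adjacent flag lie in the
same orbit; that is, `A` is in the class `2_I`. -/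
def InClass (A : AbstractPolytope n Face) (I : Set ℕ) : Prop :=
  (∀ i ∈ I, i < n) ∧ ∀ i : ℕ, i < n → (i ∈ I ↔ ∀ Φ : Flag Face, SameOrbit Φ (A.adj Φ i))

/-- The stabilizer in the automorphism group of a face `F`. -/
def faceStab (_A : AbstractPolytope n Face) (F : Face) : Subgroup (Face ≃o Face) where
  carrier := {g : Face ≃o Face | g F = F}
  one_mem' := rfl
  mul_mem' := by
    intro a b ha hb
    show (a * b) F = F
    rw [RelIso.mul_apply]
    rw [show b F = F from hb, show a F = F from ha]
  inv_mem' := by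
    intro a ha
    show a⁻¹ F = F
    conv_lhs => rw [← show a F = F from ha]
    exact a.symm_apply_apply F

lemma mem_faceStab {A : AbstractPolytope n Face} {F : Face} {g : Face ≃o Face} :
    g ∈ A.faceStab F ↔ g F = F := Iff.rfl


section Aux

variable (A : AbstractPolytope n Face)

lemma mem_smul' {g : Face ≃o Face} {Φ : Flag Face} {F : Face} :
    F ∈ g • Φ ↔ ∃ G ∈ Φ, g G = F := by
  show F ∈ Flag.map g Φ ↔ _
  rw [← SetLike.mem_coe, Flag.coe_map]
  exact Set.mem_image _ _ _

lemma smul_mem' {g : Face ≃o Face} {Φ : Flag Face} {F : Face} (h : F ∈ Φ) :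
    g F ∈ g • Φ := mem_smul'.2 ⟨F, h, rfl⟩

lemma rank_mono : ∀ {F G : Face}, F ≤ G → A.rank F ≤ A.rank G := by
  intro F G h
  rcases h.lt_or_eq with h | h
  · exact (A.rank_strictMono h).le
  · rw [h]

lemma rank_eq_of_mem {Ψ : Flag Face} {F G : Face} (hF : F ∈ Ψ) (hG : G ∈ Ψ)
    (h : A.rank F = A.rank G) : F = G := by
  have h1 := A.faceAt_eq Ψ F hF
  have h2 := A.faceAt_eq Ψ G hG
  rw [← h1, ← h2, h]

lemma exists_flag (F : Face) : ∃ Ψ : Flag Face, F ∈ Ψ := by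
  have hc : IsChain (· ≤ ·) ({F} : Set Face) := by
    intro a ha b hb hab
    rw [Set.mem_singleton_iff] at ha hb
    exact absurd (ha.trans hb.symm) hab
  obtain ⟨M, hM, hsub⟩ := hc.exists_maxChain
  exact ⟨Flag.ofIsMaxChain M hM, hsub rfl⟩

lemma faceAt_lt {Ψ : Flag Face} {i j : ℤ} (h1 : -1 ≤ i) (h2 : i < j) (h3 : j ≤ (n : ℤ)) :
    A.faceAt Ψ i < A.faceAt Ψ j := by
  have hi := A.faceAt_mem Ψ i h1 (le_trans h2.le h3)
  have hj := A.faceAt_mem Ψ j (le_trans h1 h2.le) h3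
  have hri := A.faceAt_rank Ψ i h1 (le_trans h2.le h3)
  have hrj := A.faceAt_rank Ψ j (le_trans h1 h2.le) h3
  rcases Ψ.le_or_le hi hj with h | h
  · rcases h.lt_or_eq with h | h
    · exact h
    · rw [h, hrj] at hri; omega
  · have := A.rank_mono h; omega

lemma rank_smul_faceAt (g : Face ≃o Face) (Ψ : Flag Face) :
    ∀ i : ℤ, -1 ≤ i → i ≤ (n : ℤ) → A.rank (g (A.faceAt Ψ i)) = i := by
  set f : ℤ → ℤ := fun i => A.rank (g (A.faceAt Ψ i)) with hf
  have hmono : ∀ i j : ℤ, -1 ≤ i → i < j → j ≤ (n : ℤ) → f i < f j := by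
    intro i j h1 h2 h3
    exact A.rank_strictMono (g.strictMono (A.faceAt_lt h1 h2 h3))
  have hlow : ∀ j : ℤ, -1 ≤ j → ∀ i : ℤ, j ≤ i → i ≤ (n : ℤ) → f j + (i - j) ≤ f i := by
    intro j hj i hji
    refine Int.le_induction (motive := fun i _ => i ≤ (n : ℤ) → f j + (i - j) ≤ f i) ?_ ?_ i hji
    · intro _; simp
    · intro k hk ih hk1
      have h1 := ih (by omega)
      have h2 := hmono k (k + 1) (by omega) (by omega) hk1
      omega
  intro i h1 h2
  have lb := hlow (-1) le_rfl i (by omega) h2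
  have ub := hlow i h1 (n : ℤ) h2 le_rfl
  have r1 := (A.rank_le (g (A.faceAt Ψ (-1)))).1
  have r2 := (A.rank_le (g (A.faceAt Ψ (n : ℤ)))).2
  simp only [hf] at lb ub ⊢
  omega

lemma rank_smul (g : Face ≃o Face) (F : Face) : A.rank (g F) = A.rank F := by
  obtain ⟨Ψ, hΨ⟩ := exists_flag F
  have h := A.rank_smul_faceAt g Ψ (A.rank F) (A.rank_le F).1 (A.rank_le F).2
  rw [A.faceAt_eq Ψ F hΨ] at h
  exact h

lemma smul_adj (g : Face ≃o Face) (Ψ : Flag Face) {i : ℕ} (hi : i < n) :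
    g • A.adj Ψ i = A.adj (g • Ψ) i := by
  refine A.adj_unique (g • Ψ) (g • A.adj Ψ i) i hi ?_ ?_
  · intro h
    exact A.adj_ne Ψ i hi (MulAction.injective g h)
  · intro F hF hrF
    obtain ⟨G, hG, rfl⟩ := mem_smul'.1 hF
    rw [A.rank_smul] at hrF
    exact smul_mem' (A.adj_mem Ψ i hi G hG hrF)

lemma adj_adj (Ψ : Flag Face) {i : ℕ} (hi : i < n) : A.adj (A.adj Ψ i) i = Ψ := by
  refine (A.adj_unique (A.adj Ψ i) Ψ i hi (A.adj_ne Ψ i hi).symm ?_).symm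
  intro F hF hrF
  have h1 : (-1 : ℤ) ≤ A.rank F := (A.rank_le F).1
  have h2 : A.rank F ≤ (n : ℤ) := (A.rank_le F).2
  have hmem : A.faceAt Ψ (A.rank F) ∈ A.adj Ψ i := by
    apply A.adj_mem Ψ i hi _ (A.faceAt_mem Ψ _ h1 h2)
    rw [A.faceAt_rank Ψ _ h1 h2]; exact hrF
  have heq : A.faceAt Ψ (A.rank F) = F :=
    A.rank_eq_of_mem hmem hF (by rw [A.faceAt_rank Ψ _ h1 h2])
  rw [← heq]
  exact A.faceAt_mem Ψ _ h1 h2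

include A in
lemma eq_one_of_smul_eq {g : Face ≃o Face} {Φ : Flag Face} (h : g • Φ = Φ) : g = 1 := by
  have hall : ∀ Ψ : Flag Face, g • Ψ = Ψ := by
    intro Ψ
    obtain ⟨l, c, hc0, hcl, hstep⟩ := A.connected Φ Ψ
    have key : ∀ m, m ≤ l → g • c m = c m := by
      intro m
      induction m with
      | zero => intro _; rw [hc0]; exact h
      | succ m ih =>
        intro hm
        obtain ⟨i, hin, hadj, -⟩ := hstep m (by omega)
        rw [hadj, A.smul_adj g (c m) hin, ih (by omega)]
    rw [← hcl]; exact key l le_rfl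
  refine OrderIso.ext (funext fun F => ?_)
  obtain ⟨Ψ, hΨ⟩ := exists_flag F
  have h1 : g F ∈ Ψ := by rw [← hall Ψ]; exact smul_mem' hΨ
  exact A.rank_eq_of_mem h1 hΨ (A.rank_smul g F)

lemma SameOrbit.refl' (Φ : Flag Face) : SameOrbit Φ Φ := ⟨1, one_smul _ _⟩

lemma SameOrbit.symm' {Φ Ψ : Flag Face} (h : SameOrbit Φ Ψ) : SameOrbit Ψ Φ := by
  obtain ⟨g, rfl⟩ := h; exact ⟨g⁻¹, inv_smul_smul g Φ⟩

lemma SameOrbit.trans' {Φ Ψ X : Flag Face} (h1 : SameOrbit Φ Ψ) (h2 : SameOrbit Ψ X) :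
    SameOrbit Φ X := by
  obtain ⟨g, rfl⟩ := h1; obtain ⟨h, rfl⟩ := h2; exact ⟨h * g, mul_smul h g Φ⟩

lemma sameOrbit_of_two (h2 : A.TwoOrbit) {X Y Z : Flag Face}
    (h1 : ¬ SameOrbit X Y) (h3 : ¬ SameOrbit X Z) : SameOrbit Y Z := by
  obtain ⟨Φ₁, Ψ₁, _, hall⟩ := h2
  rcases hall X with hX | hX <;> rcases hall Y with hY | hY <;> rcases hall Z with hZ | hZ <;>
    first
      | exact hY.trans' hZ.symm'
      | exact absurd (hX.trans' hY.symm') h1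
      | exact absurd (hX.trans' hZ.symm') h3

lemma not_sameOrbit_adj {I : Set ℕ} (h2 : A.TwoOrbit) (hI : A.InClass I) {i : ℕ}
    (hin : i < n) (hiI : i ∉ I) (X : Flag Face) : ¬ SameOrbit X (A.adj X i) := by
  have hex : ∃ Ψ : Flag Face, ¬ SameOrbit Ψ (A.adj Ψ i) := by
    by_contra hc
    push_neg at hc
    exact hiI ((hI.2 i hin).2 hc)
  obtain ⟨Ψ, hΨ⟩ := hex
  intro hX
  by_cases hXΨ : SameOrbit Ψ X
  · obtain ⟨h, rfl⟩ := hXΨ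
    apply hΨ
    have heq : A.adj (h • Ψ) i = h • A.adj Ψ i := (A.smul_adj h Ψ hin).symm
    have hhΨ : SameOrbit Ψ (h • Ψ) := ⟨h, rfl⟩
    refine hhΨ.trans' (hX.trans' ?_)
    rw [heq]; exact ⟨h⁻¹, inv_smul_smul h _⟩
  · have hXadj : SameOrbit (A.adj Ψ i) X := A.sameOrbit_of_two h2 hΨ hXΨ
    obtain ⟨h, rfl⟩ := hXadj
    have heq : A.adj (h • A.adj Ψ i) i = h • Ψ := by
      rw [← A.smul_adj h _ hin, A.adj_adj Ψ hin]
    apply hXΨ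
    have hhΨ : SameOrbit Ψ (h • Ψ) := ⟨h, rfl⟩
    refine hhΨ.trans' ?_
    rw [← heq]; exact hX.symm'

include A in
lemma fix_of_smul (g : Face ≃o Face) {Φ Ψ : Flag Face} (h : g • Φ = Ψ) {F : Face}
    (hF : F ∈ Φ) (hF' : F ∈ Ψ) : g F = F := by
  have h1 : g F ∈ Ψ := by rw [← h]; exact smul_mem' hF
  exact A.rank_eq_of_mem h1 hF' (A.rank_smul g F)

end Aux

end AbstractPolytope

open AbstractPolytope in
/-- For each `J ⊆ N`, the stabilizer of the subchain `Φ_J` of the base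
flag equals the distinguished subgroup `Γ_J`, generated by the distinguished generators
whose indices all avoid `J`. -/
theorem stmt11 {n : ℕ} {Face : Type*} [PartialOrder Face] (A : AbstractPolytope n Face)
    (I : Set ℕ) (h2 : A.TwoOrbit) (hI : A.InClass I)
    (Φ : Flag Face)
    (ρ : ℕ → (Face ≃o Face)) (α : ℕ → ℕ → (Face ≃o Face)) (β : ℕ → ℕ → (Face ≃o Face))
    (hρ : ∀ i ∈ I, (ρ i) • Φ = A.adj Φ i)
    (hα : ∀ j k : ℕ, j < n → k < n → j ∉ I → k ∉ I →
        (α j k) • Φ = A.adj (A.adj Φ j) k)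
    (hβ : ∀ j : ℕ, ∀ i ∈ I, j < n → j ∉ I →
        (β j i) • Φ = A.adj (A.adj (A.adj Φ j) i) j)
    (J : Set ℕ) (hJ : ∀ j ∈ J, j < n) :
    Subgroup.closure
      ({x : Face ≃o Face | ∃ i, i ∈ I ∧ i ∉ J ∧ x = ρ i}
        ∪ {x : Face ≃o Face | ∃ j k : ℕ, j < n ∧ k < n ∧ j ∉ I ∧ k ∉ I ∧
            j ∉ J ∧ k ∉ J ∧ x = α j k}
        ∪ {x : Face ≃o Face | ∃ j i : ℕ, i ∈ I ∧ i ∉ J ∧ j < n ∧ j ∉ I ∧ j ∉ J ∧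
            x = β j i})
      = ⨅ j ∈ J, A.faceStab (A.faceAt Φ (j : ℤ)) := by
  have hle : ∀ {x : Face ≃o Face} {Ψ : Flag Face}, x • Φ = Ψ →
      (∀ j ∈ J, A.faceAt Φ (j : ℤ) ∈ Ψ) → x ∈ ⨅ j ∈ J, A.faceStab (A.faceAt Φ (j : ℤ)) := by
    intro x Ψ hx hmem
    simp only [Subgroup.mem_iInf]
    intro j hj
    rw [mem_faceStab]
    exact A.fix_of_smul x hx
      (A.faceAt_mem Φ (j : ℤ) (by omega) (by have := hJ j hj; omega)) (hmem j hj)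
  have hbound : ∀ j ∈ J, A.faceAt Φ (j : ℤ) ∈ Φ ∧ A.rank (A.faceAt Φ (j : ℤ)) = (j : ℤ) := by
    intro j hj
    have := hJ j hj
    exact ⟨A.faceAt_mem Φ (j : ℤ) (by omega) (by omega),
      A.faceAt_rank Φ (j : ℤ) (by omega) (by omega)⟩
  apply le_antisymm
  · rw [Subgroup.closure_le]
    rintro x ((⟨i, hiI, hiJ, rfl⟩ | ⟨j, k, hjn, hkn, hjI, hkI, hjJ, hkJ, rfl⟩) |
      ⟨j, i, hiI, hiJ, hjn, hjI, hjJ, rfl⟩)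
    · have hin : i < n := hI.1 i hiI
      refine hle (hρ i hiI) fun m hm => ?_
      obtain ⟨hmem, hrank⟩ := hbound m hm
      refine A.adj_mem Φ i hin _ hmem ?_
      rw [hrank]
      have : m ≠ i := fun h => hiJ (h ▸ hm)
      omega
    · refine hle (hα j k hjn hkn hjI hkI) fun m hm => ?_
      obtain ⟨hmem, hrank⟩ := hbound m hm
      have hmj : m ≠ j := fun h => hjJ (h ▸ hm)
      have hmk : m ≠ k := fun h => hkJ (h ▸ hm)
      refine A.adj_mem _ k hkn _ (A.adj_mem Φ j hjn _ hmem ?_) ?_ <;> rw [hrank] <;> omega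
    · refine hle (hβ j i hiI hjn hjI) fun m hm => ?_
      obtain ⟨hmem, hrank⟩ := hbound m hm
      have hmj : m ≠ j := fun h => hjJ (h ▸ hm)
      have hmi : m ≠ i := fun h => hiJ (h ▸ hm)
      have hin : i < n := hI.1 i hiI
      refine A.adj_mem _ j hjn _ (A.adj_mem _ i hin _ (A.adj_mem Φ j hjn _ hmem ?_) ?_) ?_ <;>
        rw [hrank] <;> omega
  · intro g hg
    simp only [Subgroup.mem_iInf, mem_faceStab] at hg
    have key : ∀ l : ℕ, ∀ (g' : Face ≃o Face) (c : ℕ → Flag Face),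
        c 0 = Φ → c l = g' • Φ →
        (∀ m < l, ∃ i, i < n ∧ i ∉ J ∧ c (m + 1) = A.adj (c m) i) →
        g' ∈ Subgroup.closure
          ({x : Face ≃o Face | ∃ i, i ∈ I ∧ i ∉ J ∧ x = ρ i}
            ∪ {x : Face ≃o Face | ∃ j k : ℕ, j < n ∧ k < n ∧ j ∉ I ∧ k ∉ I ∧
                j ∉ J ∧ k ∉ J ∧ x = α j k}
            ∪ {x : Face ≃o Face | ∃ j i : ℕ, i ∈ I ∧ i ∉ J ∧ j < n ∧ j ∉ I ∧ j ∉ J ∧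
                x = β j i}) := by
      intro l
      induction l using Nat.strong_induction_on with
      | _ l IH =>
        intro g' c hc0 hcl hstep
        match l with
        | 0 =>
          have : g' • Φ = Φ := by rw [← hcl, hc0]
          rw [A.eq_one_of_smul_eq this]
          exact one_mem _
        | 1 =>
          obtain ⟨i₁, hi₁n, hi₁J, hadj1⟩ := hstep 0 (by omega)
          by_cases hi₁I : i₁ ∈ I
          · have hr : ρ i₁ • Φ = A.adj Φ i₁ := hρ i₁ hi₁I
            have hgΦ : g' • Φ = ρ i₁ • Φ := by rw [← hcl, hadj1, hc0, hr]
            have : (ρ i₁)⁻¹ * g' = 1 := A.eq_one_of_smul_eq (by rw [mul_smul, hgΦ, inv_smul_smul])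
            have hg' : g' = ρ i₁ := by
              have := congrArg (fun y => ρ i₁ * y) this
              simpa [mul_assoc] using this
            rw [hg']
            exact Subgroup.subset_closure (Or.inl (Or.inl ⟨i₁, hi₁I, hi₁J, rfl⟩))
          · exfalso
            have : g' • Φ = A.adj Φ i₁ := by rw [← hcl, hadj1, hc0]
            exact A.not_sameOrbit_adj h2 hI hi₁n hi₁I Φ ⟨g', this⟩
        | (l'' + 2) =>
          obtain ⟨i₁, hi₁n, hi₁J, hadj1⟩ := hstep 0 (by omega)
          rw [hc0] at hadj1
          by_cases hi₁I : i₁ ∈ I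
          · have hr : ρ i₁ • Φ = A.adj Φ i₁ := hρ i₁ hi₁I
            have hrec := IH (l'' + 1) (by omega) ((ρ i₁)⁻¹ * g')
              (fun m => (ρ i₁)⁻¹ • c (m + 1))
              (by show (ρ i₁)⁻¹ • c (0 + 1) = Φ; rw [hadj1, ← hr, inv_smul_smul])
              (by show (ρ i₁)⁻¹ • c (l'' + 1 + 1) = _; rw [hcl, mul_smul])
              (by
                intro m hm
                obtain ⟨i, hin, hiJ, hadj⟩ := hstep (m + 1) (by omega)
                exact ⟨i, hin, hiJ, by
                  show (ρ i₁)⁻¹ • c (m + 1 + 1) = _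
                  rw [hadj]; exact A.smul_adj _ _ hin⟩)
            have : g' = ρ i₁ * ((ρ i₁)⁻¹ * g') := by group
            rw [this]
            exact mul_mem
              (Subgroup.subset_closure (Or.inl (Or.inl ⟨i₁, hi₁I, hi₁J, rfl⟩))) hrec
          · obtain ⟨i₂, hi₂n, hi₂J, hadj2⟩ := hstep 1 (by omega)
            rw [hadj1] at hadj2
            by_cases hi₂I : i₂ ∈ I
            · -- β case
              have hb : β i₁ i₂ • Φ = A.adj (A.adj (A.adj Φ i₁) i₂) i₁ :=
                hβ i₁ i₂ hi₂I hi₁n hi₁I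
              have hkey : β i₁ i₂ • A.adj Φ i₁ = A.adj (A.adj Φ i₁) i₂ := by
                rw [A.smul_adj _ _ hi₁n, hb, A.adj_adj _ hi₁n]
              have hrec := IH (l'' + 1) (by omega) ((β i₁ i₂)⁻¹ * g')
                (fun m => match m with
                  | 0 => Φ
                  | (m' + 1) => (β i₁ i₂)⁻¹ • c (m' + 2))
                rfl
                (by show (β i₁ i₂)⁻¹ • c (l'' + 2) = _; rw [hcl, mul_smul])
                (by
                  intro m hm
                  match m with
                  | 0 =>
                    refine ⟨i₁, hi₁n, hi₁J, ?_⟩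
                    show (β i₁ i₂)⁻¹ • c 2 = A.adj Φ i₁
                    rw [show c 2 = c (1 + 1) from rfl, hadj2, ← hkey, inv_smul_smul]
                  | (m' + 1) =>
                    obtain ⟨i, hin, hiJ, hadj⟩ := hstep (m' + 2) (by omega)
                    refine ⟨i, hin, hiJ, ?_⟩
                    show (β i₁ i₂)⁻¹ • c (m' + 3) = _
                    rw [show c (m' + 3) = c (m' + 2 + 1) from rfl, hadj]
                    exact A.smul_adj _ _ hin)
              have : g' = β i₁ i₂ * ((β i₁ i₂)⁻¹ * g') := by group
              rw [this]
              exact mul_mem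
                (Subgroup.subset_closure
                  (Or.inr ⟨i₁, i₂, hi₂I, hi₂J, hi₁n, hi₁I, hi₁J, rfl⟩)) hrec
            · -- α case
              have ha : α i₁ i₂ • Φ = A.adj (A.adj Φ i₁) i₂ :=
                hα i₁ i₂ hi₁n hi₂n hi₁I hi₂I
              have hrec := IH l'' (by omega) ((α i₁ i₂)⁻¹ * g')
                (fun m => (α i₁ i₂)⁻¹ • c (m + 2))
                (by
                  show (α i₁ i₂)⁻¹ • c 2 = Φ
                  rw [show c 2 = c (1 + 1) from rfl, hadj2, ← ha, inv_smul_smul])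
                (by show (α i₁ i₂)⁻¹ • c (l'' + 2) = _; rw [hcl, mul_smul])
                (by
                  intro m hm
                  obtain ⟨i, hin, hiJ, hadj⟩ := hstep (m + 2) (by omega)
                  refine ⟨i, hin, hiJ, ?_⟩
                  show (α i₁ i₂)⁻¹ • c (m + 3) = _
                  rw [show c (m + 3) = c (m + 2 + 1) from rfl, hadj]
                  exact A.smul_adj _ _ hin)
              have : g' = α i₁ i₂ * ((α i₁ i₂)⁻¹ * g') := by group
              rw [this]
              exact mul_mem
                (Subgroup.subset_closure
                  (Or.inl (Or.inr ⟨i₁, i₂, hi₁n, hi₂n, hi₁I, hi₂I, hi₁J, hi₂J, rfl⟩))) hrec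
    obtain ⟨l, c, hc0, hcl, hstep⟩ := A.connected Φ (g • Φ)
    refine key l g c hc0 hcl ?_
    intro m hm
    obtain ⟨i, hin, hadj, hF⟩ := hstep m hm
    refine ⟨i, hin, ?_, hadj⟩
    intro hiJ
    have h1 : A.faceAt Φ (i : ℤ) ∈ Φ :=
      A.faceAt_mem Φ _ (by omega) (by have := hJ i hiJ; omega)
    have h2 : A.faceAt Φ (i : ℤ) ∈ g • Φ := by
      rw [← hg i hiJ]; exact smul_mem' h1
    exact hF _ h1 h2 (A.faceAt_rank Φ _ (by omega) (by have := hJ i hiJ; omega))
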